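/- Let α, β ∈ ℂ, let U ⊆ ℂ be a nonempty open connected set, and let q, p : U → ℂ be differentiable functions with q(t) ≠ 0 for all t ∈ U that solve the Takasaki Hamiltonian system for P_IV: q'(t) = p(t) and p'(t) = (1/2)(3(q(t)/2)⁵ + 8t(q(t)/2)³ + 4(t² − α)(q(t)/2) + 2β(q(t)/2)⁻³) on U. Then the function w(t) = (q(t)/2)² is twice differentiable and satisfies the fourth Painlevé equation w'' = (w')²/(2w) + (3/2)w³ + 4t·w² + 2(t² − α)w + β/w on U. -/

import Mathlib

open Complex

private lemma takasaki_alg (x P T A B : ℂ) (hx : x ≠ 0) :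
    (P * P + x * ((1/2) * (3*(x/2)^5 + 8*T*(x/2)^3 + 4*(T^2-A)*(x/2) + 2*B/(x/2)^3))) / 2
      = (x*P/2)^2 / (2*(x/2)^2) + 3/2*((x/2)^2)^3 + 4*T*((x/2)^2)^2
        + 2*(T^2-A)*(x/2)^2 + B/(x/2)^2 := by
  have h1 : 2 * B / (x/2)^3 = 16 * B / x^3 := by rw [div_pow]; ring
  have h4 : B / (x/2)^2 = 4 * B / x^2 := by rw [div_pow]; ring
  rw [h1, h4]
  field_simp
  ring

/-- a solution `(q, p)` of the Takasaki Hamiltonian system for P_IV with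
parameters `α, β` (with `q` nonvanishing) yields, via `w = (q/2)²`, a solution of the
fourth Painlevé equation with the same parameters. -/
theorem takasaki_hamiltonian_system_gives_PIV
    (α β : ℂ) (U : Set ℂ)
    (hUo : IsOpen U) (hUne : U.Nonempty) (hUc : IsPreconnected U)
    (q p : ℂ → ℂ)
    (hq0 : ∀ t ∈ U, q t ≠ 0)
    (hq : ∀ t ∈ U, HasDerivAt q (p t) t)
    (hp : ∀ t ∈ U, HasDerivAt p
      ((1 / 2) * (3 * (q t / 2) ^ 5 + 8 * t * (q t / 2) ^ 3 + 4 * (t ^ 2 - α) * (q t / 2)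
        + 2 * β / (q t / 2) ^ 3)) t)
    (w : ℂ → ℂ) (hw_def : ∀ t, w t = (q t / 2) ^ 2) :
    ∀ t ∈ U, DifferentiableAt ℂ w t ∧ DifferentiableAt ℂ (deriv w) t ∧
      deriv (deriv w) t =
        (deriv w t) ^ 2 / (2 * w t) + 3 / 2 * (w t) ^ 3 + 4 * t * (w t) ^ 2
          + 2 * (t ^ 2 - α) * w t + β / w t := by
  have hwfun : w = fun s => (q s / 2) ^ 2 := funext hw_def
  have hw' : ∀ t ∈ U, HasDerivAt w (q t * p t / 2) t := by
    intro t ht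
    have h : HasDerivAt (fun s => (q s / 2) ^ 2) _ t := ((hq t ht).div_const 2).pow 2
    rw [hwfun]
    convert h using 1
    ring
  intro t ht
  have heq : deriv w =ᶠ[nhds t] fun s => q s * p s / 2 := by
    filter_upwards [hUo.mem_nhds ht] with s hs
    exact (hw' s hs).deriv
  set P := (1 / 2) * (3 * (q t / 2) ^ 5 + 8 * t * (q t / 2) ^ 3 + 4 * (t ^ 2 - α) * (q t / 2)
      + 2 * β / (q t / 2) ^ 3) with hP
  have hd2 : HasDerivAt (fun s => q s * p s / 2) ((p t * p t + q t * P) / 2) t :=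
    ((hq t ht).mul (hp t ht)).div_const 2
  have hdw : HasDerivAt (deriv w) ((p t * p t + q t * P) / 2) t :=
    hd2.congr_of_eventuallyEq heq
  refine ⟨(hw' t ht).differentiableAt, hdw.differentiableAt, ?_⟩
  rw [hdw.deriv, (hw' t ht).deriv, hw_def t, hP]
  exact takasaki_alg (q t) (p t) t α β (hq0 t ht)
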